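/- Strong completeness of the logic of clandestine operations: if X ⊬ φ, then there exists a state w of some clandestine game such that w ⊨ χ for every χ ∈ X and w ⊭ φ. -/

import Mathlib

/-- Formulas of the logic of clandestine operations: propositional variables,
falsum, negation, implication, distributed knowledge `know C φ` and
clandestine power `how C φ` for coalitions `C ⊆ Ag`. -/
inductive Formula (α : Type) (Ag : Type) : Type
  | var  : α → Formula α Ag
  | bot  : Formula α Ag
  | neg  : Formula α Ag → Formula α Ag
  | imp  : Formula α Ag → Formula α Ag → Formula α Ag
  | know : Set Ag → Formula α Ag → Formula α Ag
  | how  : Set Ag → Formula α Ag → Formula α Ag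

namespace Formula

/-- Defined disjunction. -/
def or {α Ag : Type} (φ ψ : Formula α Ag) : Formula α Ag := imp (neg φ) ψ

/-- Defined verum. -/
def top {α Ag : Type} : Formula α Ag := neg bot

/-- Boolean evaluation treating variables and modal formulas as atoms. -/
def eval {α Ag : Type} (v : Formula α Ag → Bool) : Formula α Ag → Bool
  | var p => v (var p)
  | bot => false
  | neg φ => !(eval v φ)
  | imp φ ψ => !(eval v φ) || eval v ψ
  | know C φ => v (know C φ)
  | how C φ => v (how C φ)

end Formula

/-- A propositional tautology: true under every Boolean valuation of its
atoms (variables and modal subformulas). -/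
def Tautology {α Ag : Type} (φ : Formula α Ag) : Prop :=
  ∀ v, φ.eval v = true

/-- Theorems of the logic of clandestine operations. -/
inductive Prov {α Ag : Type} : Formula α Ag → Prop
  | taut {φ} : Tautology φ → Prov φ
  | truth (C : Set Ag) (φ) : Prov (.imp (.know C φ) φ)
  | negIntro (C : Set Ag) (φ) :
      Prov (.imp (.neg (.know C φ)) (.know C (.neg (.know C φ))))
  | distrib (C : Set Ag) (φ ψ) :
      Prov (.imp (.know C (.imp φ ψ)) (.imp (.know C φ) (.know C ψ)))
  | mono {C' C : Set Ag} (φ) : C' ⊆ C → Prov (.imp (.know C' φ) (.know C φ))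
  | stratIntro (C : Set Ag) (φ) : Prov (.imp (.how C φ) (.know C (.how C φ)))
  | cia {C I A : Set Ag} (φ ψ) : C ∩ (I ∪ A) = ∅ →
      Prov (.imp
        (.know (C ∪ I) (.know (A ∪ I) (.imp (.know C φ) (.know (C ∪ I) ψ))))
        (.imp (.how C φ) (.how (C ∪ I) ψ)))
  | nonterm (C : Set Ag) : Prov (.neg (.how C .bot))
  | emptyCoal (φ : Formula α Ag) : Prov (.neg (.how ∅ φ))
  | mp {φ ψ} : Prov (.imp φ ψ) → Prov φ → Prov ψ
  | necK (C : Set Ag) {φ} : Prov φ → Prov (.know C φ)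
  | necH {C : Set Ag} {φ} : C ≠ ∅ → Prov φ → Prov (.how C φ)

/-- Derivability from a set of hypotheses `X`: from theorems of the system
and members of `X` using Modus Ponens only. -/
inductive ProvFrom {α Ag : Type} (X : Set (Formula α Ag)) : Formula α Ag → Prop
  | hyp {φ} : φ ∈ X → ProvFrom X φ
  | thm {φ} : Prov φ → ProvFrom X φ
  | mp {φ ψ} : ProvFrom X (.imp φ ψ) → ProvFrom X φ → ProvFrom X ψ

/-- A set of formulas is consistent if falsum is not derivable from it. -/
def Consistent {α Ag : Type} (X : Set (Formula α Ag)) : Prop :=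
  ¬ ProvFrom X .bot

/-- Maximal consistent set of formulas. -/
def MCS {α Ag : Type} (X : Set (Formula α Ag)) : Prop :=
  Consistent X ∧ ∀ φ : Formula α Ag, φ ∈ X ∨ .neg φ ∈ X

/-- A clandestine game. -/
structure Game (α Ag : Type) where
  W : Type
  sim : Ag → W → W → Prop
  sim_equiv : ∀ a, Equivalence (sim a)
  Δ : Type
  Δ_nonempty : Nonempty Δ
  M : W → Set Ag → Δ → W → Prop
  concealment : ∀ w C δ u, M w C δ u → ∀ a ∉ C, sim a w u
  nonterm : ∀ w C δ, ∃ u, M w C δ u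
  π : α → Set W

/-- Coalition indistinguishability: `w ∼_C u` iff `w ∼_a u` for all `a ∈ C`. -/
def Game.simC {α Ag : Type} (G : Game α Ag) (C : Set Ag) (w u : G.W) : Prop :=
  ∀ a ∈ C, G.sim a w u

/-- Satisfaction relation for clandestine games. -/
def Game.Sat {α Ag : Type} (G : Game α Ag) : G.W → Formula α Ag → Prop
  | w, .var p => w ∈ G.π p
  | _, .bot => False
  | w, .neg φ => ¬ G.Sat w φ
  | w, .imp φ ψ => G.Sat w φ → G.Sat w ψ
  | w, .know C φ => ∀ u, G.simC C w u → G.Sat u φ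
  | w, .how C φ => ∃ C', C' ⊆ C ∧ C'.Nonempty ∧ ∃ δ : G.Δ,
      ∀ w' u u', G.simC C w w' → G.M w' C' δ u → G.simC C u u' → G.Sat u' φ

namespace Clandestine

open Formula

variable {α Ag : Type}

/-! ### Propositional helpers -/

lemma prov_mp {φ ψ : Formula α Ag} (h : Prov (Formula.imp φ ψ)) (h' : Prov φ) : Prov ψ :=
  Prov.mp h h'

lemma taut_id (φ : Formula α Ag) : Prov (Formula.imp φ φ) := by
  apply Prov.taut; intro v; simp only [Formula.eval]
  generalize Formula.eval v φ = a; revert a; decide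

lemma taut_k (φ ψ : Formula α Ag) : Prov (Formula.imp φ (Formula.imp ψ φ)) := by
  apply Prov.taut; intro v; simp only [Formula.eval]
  generalize Formula.eval v φ = a; generalize Formula.eval v ψ = b; revert a b; decide

lemma taut_s (β χ ψ : Formula α Ag) :
    Prov (Formula.imp (Formula.imp β (Formula.imp χ ψ))
      (Formula.imp (Formula.imp β χ) (Formula.imp β ψ))) := by
  apply Prov.taut; intro v; simp only [Formula.eval]
  generalize Formula.eval v β = a; generalize Formula.eval v χ = b
  generalize Formula.eval v ψ = c; revert a b c; decide

/-- Chaining implications. -/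
lemma prov_imp_trans {φ ψ χ : Formula α Ag} (h1 : Prov (Formula.imp φ ψ))
    (h2 : Prov (Formula.imp ψ χ)) : Prov (Formula.imp φ χ) := by
  have t : Prov (Formula.imp (Formula.imp φ ψ) (Formula.imp (Formula.imp ψ χ)
      (Formula.imp φ χ))) := by
    apply Prov.taut; intro v; simp only [Formula.eval]
    generalize Formula.eval v φ = a; generalize Formula.eval v ψ = b
    generalize Formula.eval v χ = c; revert a b c; decide
  exact prov_mp (prov_mp t h1) h2

/-! ### Derivability -/

lemma provFrom_mono {X Y : Set (Formula α Ag)} {φ : Formula α Ag}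
    (hXY : X ⊆ Y) (h : ProvFrom X φ) : ProvFrom Y φ := by
  induction h with
  | hyp h => exact ProvFrom.hyp (hXY h)
  | thm h => exact ProvFrom.thm h
  | mp _ _ ih1 ih2 => exact ProvFrom.mp ih1 ih2

lemma provFrom_of_prov {X : Set (Formula α Ag)} {φ : Formula α Ag} (h : Prov φ) :
    ProvFrom X φ := ProvFrom.thm h

/-- Deduction theorem. -/
lemma deduction {X : Set (Formula α Ag)} {β γ : Formula α Ag}
    (h : ProvFrom (insert β X) γ) : ProvFrom X (Formula.imp β γ) := by
  induction h with
  | @hyp φ h =>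
    rcases Set.mem_insert_iff.mp h with rfl | h
    · exact ProvFrom.thm (taut_id _)
    · exact ProvFrom.mp (ProvFrom.thm (taut_k φ β)) (ProvFrom.hyp h)
  | @thm φ h => exact ProvFrom.mp (ProvFrom.thm (taut_k φ β)) (ProvFrom.thm h)
  | @mp φ ψ _ _ ih1 ih2 =>
    exact ProvFrom.mp (ProvFrom.mp (ProvFrom.thm (taut_s β φ ψ)) ih1) ih2

/-- Compactness of derivability. -/
lemma provFrom_finite {X : Set (Formula α Ag)} {γ : Formula α Ag}
    (h : ProvFrom X γ) : ∃ F : Set (Formula α Ag), F ⊆ X ∧ F.Finite ∧ ProvFrom F γ := by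
  induction h with
  | @hyp φ h =>
    exact ⟨{φ}, by simpa using h, Set.finite_singleton φ, ProvFrom.hyp rfl⟩
  | @thm φ h => exact ⟨∅, by simp, Set.finite_empty, ProvFrom.thm h⟩
  | @mp φ ψ _ _ ih1 ih2 =>
    obtain ⟨F1, hF1, hf1, hp1⟩ := ih1
    obtain ⟨F2, hF2, hf2, hp2⟩ := ih2
    exact ⟨F1 ∪ F2, Set.union_subset hF1 hF2, hf1.union hf2,
      ProvFrom.mp (provFrom_mono Set.subset_union_left hp1) (provFrom_mono Set.subset_union_right hp2)⟩

lemma consistent_mono {X Y : Set (Formula α Ag)} (hXY : X ⊆ Y) (h : Consistent Y) :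
    Consistent X := fun hx => h (provFrom_mono hXY hx)

/-- Lindenbaum's lemma. -/
lemma lindenbaum {X : Set (Formula α Ag)} (h : Consistent X) :
    ∃ Y, X ⊆ Y ∧ MCS Y := by
  obtain ⟨M, hXM, hM⟩ := zorn_subset_nonempty {T : Set (Formula α Ag) | Consistent T}
    (fun c hc hchain hne => by
      refine ⟨⋃₀ c, ?_, fun s hs => Set.subset_sUnion_of_mem hs⟩
      intro hbot
      obtain ⟨F, hFsub, hFfin, hFp⟩ := provFrom_finite hbot
      -- find a chain member containing F
      have key : ∀ F : Set (Formula α Ag), F.Finite → F ⊆ ⋃₀ c → ∃ t ∈ c, F ⊆ t := by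
        intro F hF
        refine Set.Finite.induction_on (motive := fun F _ => F ⊆ ⋃₀ c → ∃ t ∈ c, F ⊆ t) F hF ?_ ?_
        · intro _; obtain ⟨t, ht⟩ := hne; exact ⟨t, ht, by simp⟩
        · rintro x F' _ _ ih hsub
          obtain ⟨t, htc, hFt⟩ := ih (fun y hy => hsub (Set.mem_insert_of_mem _ hy))
          obtain ⟨s, hsc, hxs⟩ : ∃ s ∈ c, x ∈ s := by
            have := hsub (Set.mem_insert x F')
            simpa [Set.mem_sUnion] using this
          rcases hchain.total hsc htc with hst | hts
          · refine ⟨t, htc, fun y hy => ?_⟩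
            rcases Set.mem_insert_iff.mp hy with rfl | hy
            exacts [hst hxs, hFt hy]
          · refine ⟨s, hsc, fun y hy => ?_⟩
            rcases Set.mem_insert_iff.mp hy with rfl | hy
            exacts [hxs, hts (hFt hy)]
      obtain ⟨t, htc, hFt⟩ := key F hFfin hFsub
      exact (hc htc) (provFrom_mono hFt hFp)) X h
  refine ⟨M, hXM, hM.prop, fun φ => ?_⟩
  by_contra hcon
  push_neg at hcon
  obtain ⟨h1, h2⟩ := hcon
  have hi1 : ¬ Consistent (insert φ M) := by
    intro hc
    have := hM.eq_of_ge (y := insert φ M) hc (Set.subset_insert _ _)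
    exact h1 (this ▸ Set.mem_insert _ _)
  have hi2 : ¬ Consistent (insert (Formula.neg φ) M) := by
    intro hc
    have := hM.eq_of_ge (y := insert (Formula.neg φ) M) hc (Set.subset_insert _ _)
    exact h2 (this ▸ Set.mem_insert _ _)
  have d1 : ProvFrom M (Formula.imp φ Formula.bot) := by
    apply deduction; by_contra hne; exact hi1 hne
  have d2 : ProvFrom M (Formula.imp (Formula.neg φ) Formula.bot) := by
    apply deduction; by_contra hne; exact hi2 hne
  have t : Prov (Formula.imp (Formula.imp φ Formula.bot)
      (Formula.imp (Formula.imp (Formula.neg φ) Formula.bot) Formula.bot)) := by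
    apply Prov.taut; intro v; simp only [Formula.eval]
    generalize Formula.eval v φ = a; revert a; decide
  exact hM.prop (ProvFrom.mp (ProvFrom.mp (ProvFrom.thm t) d1) d2)

end Clandestine
namespace Clandestine

open Formula

variable {α Ag : Type}

/-! ### MCS facts -/

lemma mcs_not_both {Y : Set (Formula α Ag)} (hY : MCS Y) {φ : Formula α Ag}
    (h1 : φ ∈ Y) (h2 : Formula.neg φ ∈ Y) : False := by
  have t : Prov (Formula.imp φ (Formula.imp (Formula.neg φ) Formula.bot)) := by
    apply Prov.taut; intro v; simp only [Formula.eval]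
    generalize Formula.eval v φ = a; revert a; decide
  exact hY.1 (ProvFrom.mp (ProvFrom.mp (ProvFrom.thm t) (ProvFrom.hyp h1)) (ProvFrom.hyp h2))

lemma mcs_mem_of_provFrom {Y : Set (Formula α Ag)} (hY : MCS Y) {φ : Formula α Ag}
    (h : ProvFrom Y φ) : φ ∈ Y := by
  rcases hY.2 φ with hm | hm
  · exact hm
  · exfalso
    have t : Prov (Formula.imp φ (Formula.imp (Formula.neg φ) Formula.bot)) := by
      apply Prov.taut; intro v; simp only [Formula.eval]
      generalize Formula.eval v φ = a; revert a; decide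
    exact hY.1 (ProvFrom.mp (ProvFrom.mp (ProvFrom.thm t) h) (ProvFrom.hyp hm))

lemma mcs_mem_of_prov {Y : Set (Formula α Ag)} (hY : MCS Y) {φ : Formula α Ag}
    (h : Prov φ) : φ ∈ Y := mcs_mem_of_provFrom hY (ProvFrom.thm h)

lemma mcs_mp_mem {Y : Set (Formula α Ag)} (hY : MCS Y) {φ ψ : Formula α Ag}
    (h : Formula.imp φ ψ ∈ Y) (h' : φ ∈ Y) : ψ ∈ Y :=
  mcs_mem_of_provFrom hY (ProvFrom.mp (ProvFrom.hyp h) (ProvFrom.hyp h'))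

lemma mcs_mp_prov {Y : Set (Formula α Ag)} (hY : MCS Y) {φ ψ : Formula α Ag}
    (h : Prov (Formula.imp φ ψ)) (h' : φ ∈ Y) : ψ ∈ Y :=
  mcs_mp_mem hY (mcs_mem_of_prov hY h) h'

lemma mcs_not_mem_iff {Y : Set (Formula α Ag)} (hY : MCS Y) {φ : Formula α Ag} :
    φ ∉ Y ↔ Formula.neg φ ∈ Y := by
  constructor
  · intro h; rcases hY.2 φ with hm | hm
    · exact absurd hm h
    · exact hm
  · intro h hm; exact mcs_not_both hY hm h

lemma mcs_bot_not_mem {Y : Set (Formula α Ag)} (hY : MCS Y) : Formula.bot ∉ Y :=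
  fun h => hY.1 (ProvFrom.hyp h)

lemma mcs_imp_mem_iff {Y : Set (Formula α Ag)} (hY : MCS Y) {φ ψ : Formula α Ag} :
    Formula.imp φ ψ ∈ Y ↔ (φ ∈ Y → ψ ∈ Y) := by
  constructor
  · exact fun h h' => mcs_mp_mem hY h h'
  · intro h
    by_cases hφ : φ ∈ Y
    · have := h hφ
      refine mcs_mp_prov hY ?_ this
      exact taut_k ψ φ
    · have hn : Formula.neg φ ∈ Y := (mcs_not_mem_iff hY).mp hφ
      refine mcs_mp_prov hY ?_ hn
      apply Prov.taut; intro v; simp only [Formula.eval]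
      generalize Formula.eval v φ = a; generalize Formula.eval v ψ = b; revert a b; decide

/-! ### Derived modal theorems -/

/-- Monotone rule: from `⊢ φ → ψ` infer `⊢ K_C φ → K_C ψ`. -/
lemma know_imp {C : Set Ag} {φ ψ : Formula α Ag} (h : Prov (Formula.imp φ ψ)) :
    Prov (Formula.imp (Formula.know C φ) (Formula.know C ψ)) :=
  prov_mp (Prov.distrib C φ ψ) (Prov.necK C h)

/-- Positive introspection, derived from T and 5. -/
lemma know_four (C : Set Ag) (φ : Formula α Ag) :
    Prov (Formula.imp (Formula.know C φ) (Formula.know C (Formula.know C φ))) := by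
  -- Kφ → ¬K¬Kφ
  have h1 : Prov (Formula.imp (Formula.know C φ)
      (Formula.neg (Formula.know C (Formula.neg (Formula.know C φ))))) := by
    -- from truth: K¬Kφ → ¬Kφ, i.e. contrapositive Kφ → ¬K¬Kφ
    have t := Prov.truth C (Formula.neg (Formula.know C φ))
    -- t : K C (¬ K C φ) → ¬ K C φ
    have c : Prov (Formula.imp
        (Formula.imp (Formula.know C (Formula.neg (Formula.know C φ))) (Formula.neg (Formula.know C φ)))
        (Formula.imp (Formula.know C φ) (Formula.neg (Formula.know C (Formula.neg (Formula.know C φ)))))) := by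
      apply Prov.taut; intro v; simp only [Formula.eval]
      generalize v (Formula.know C (Formula.neg (Formula.know C φ))) = a
      generalize v (Formula.know C φ) = b
      revert a b; decide
    exact prov_mp c t
  -- ¬K¬Kφ → K¬K¬Kφ  (5 applied to ¬Kφ)
  have h2 := Prov.negIntro C (Formula.neg (Formula.know C φ))
  -- K¬K¬Kφ → KKφ : from 5 : ¬Kφ → K¬Kφ, contrapositive ¬K¬Kφ → Kφ; nec & distrib
  have h3 : Prov (Formula.imp (Formula.neg (Formula.know C (Formula.neg (Formula.know C φ))))
      (Formula.know C φ)) := by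
    have t5 := Prov.negIntro C φ
    have c : Prov (Formula.imp
        (Formula.imp (Formula.neg (Formula.know C φ)) (Formula.know C (Formula.neg (Formula.know C φ))))
        (Formula.imp (Formula.neg (Formula.know C (Formula.neg (Formula.know C φ)))) (Formula.know C φ))) := by
      apply Prov.taut; intro v; simp only [Formula.eval]
      generalize v (Formula.know C φ) = a
      generalize v (Formula.know C (Formula.neg (Formula.know C φ))) = b
      revert a b; decide
    exact prov_mp c t5
  have h4 := know_imp (C := C) h3
  exact prov_imp_trans h1 (prov_imp_trans h2 h4)

/-- If `⊢ φ → K_C φ` then `⊢ ¬φ → K_C ¬φ`. -/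
lemma neg_know_intro {C : Set Ag} {φ : Formula α Ag}
    (h : Prov (Formula.imp φ (Formula.know C φ))) :
    Prov (Formula.imp (Formula.neg φ) (Formula.know C (Formula.neg φ))) := by
  -- ¬φ → ¬Kφ (contrapositive of truth)
  have h1 : Prov (Formula.imp (Formula.neg φ) (Formula.neg (Formula.know C φ))) := by
    have t := Prov.truth C φ
    have c : Prov (Formula.imp (Formula.imp (Formula.know C φ) φ)
        (Formula.imp (Formula.neg φ) (Formula.neg (Formula.know C φ)))) := by
      apply Prov.taut; intro v; simp only [Formula.eval]
      generalize v (Formula.know C φ) = a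
      generalize Formula.eval v φ = b
      revert a b; decide
    exact prov_mp c t
  -- ¬Kφ → K¬Kφ
  have h2 := Prov.negIntro C φ
  -- ¬Kφ → ¬φ (contrapositive of h)
  have h3 : Prov (Formula.imp (Formula.neg (Formula.know C φ)) (Formula.neg φ)) := by
    have c : Prov (Formula.imp (Formula.imp φ (Formula.know C φ))
        (Formula.imp (Formula.neg (Formula.know C φ)) (Formula.neg φ))) := by
      apply Prov.taut; intro v; simp only [Formula.eval]
      generalize v (Formula.know C φ) = a
      generalize Formula.eval v φ = b
      revert a b; decide
    exact prov_mp c h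
  have h4 := know_imp (C := C) h3
  exact prov_imp_trans h1 (prov_imp_trans h2 h4)

/-- Double negation elimination inside `K`. -/
lemma know_of_know_negneg {Y : Set (Formula α Ag)} (hY : MCS Y) {C : Set Ag}
    {φ : Formula α Ag} (h : Formula.know C (Formula.neg (Formula.neg φ)) ∈ Y) :
    Formula.know C φ ∈ Y := by
  refine mcs_mp_prov hY (know_imp ?_) h
  apply Prov.taut; intro v; simp only [Formula.eval]
  generalize Formula.eval v φ = a; revert a; decide

end Clandestine
namespace Clandestine

open Formula

variable {α Ag : Type}

/-- The set of formulas known (as distributed knowledge of `D`) in `Y`. -/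
def KSet (D : Set Ag) (Y : Set (Formula α Ag)) : Set (Formula α Ag) :=
  {χ | Formula.know D χ ∈ Y}

/-- Closure: anything derivable from `KSet D Y` is known by `D` in `Y`. -/
lemma kset_closure {D : Set Ag} {Y : Set (Formula α Ag)} (hY : MCS Y)
    {γ : Formula α Ag} (h : ProvFrom (KSet D Y) γ) : Formula.know D γ ∈ Y := by
  induction h with
  | hyp h => exact h
  | thm h => exact mcs_mem_of_prov hY (Prov.necK D h)
  | @mp φ ψ _ _ ih1 ih2 =>
    exact mcs_mp_mem hY (mcs_mp_prov hY (Prov.distrib D φ ψ) ih1) ih2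

/-- `KSet D Y` itself is consistent (it is contained in `Y`). -/
lemma kset_consistent {D : Set Ag} {Y : Set (Formula α Ag)} (hY : MCS Y) :
    Consistent (KSet (α := α) D Y) := by
  intro h
  exact hY.1 (provFrom_mono (fun χ hχ => mcs_mp_prov hY (Prov.truth D χ) hχ) h)

/-- If `KSet D Y ∪ {β}` is inconsistent, then `K_D (β → ⊥) ∈ Y`. -/
lemma kset_incons_one {D : Set Ag} {Y : Set (Formula α Ag)} (hY : MCS Y)
    {β : Formula α Ag} (h : ¬ Consistent (insert β (KSet D Y))) :
    Formula.know D (Formula.imp β Formula.bot) ∈ Y := by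
  have hp : ProvFrom (insert β (KSet D Y)) Formula.bot := by
    by_contra hc; exact h hc
  exact kset_closure hY (deduction hp)

/-- If `KSet D Y ∪ {β₁, β₂}` is inconsistent, then `K_D (β₁ → β₂ → ⊥) ∈ Y`. -/
lemma kset_incons_two {D : Set Ag} {Y : Set (Formula α Ag)} (hY : MCS Y)
    {β₁ β₂ : Formula α Ag} (h : ¬ Consistent (insert β₂ (insert β₁ (KSet D Y)))) :
    Formula.know D (Formula.imp β₁ (Formula.imp β₂ Formula.bot)) ∈ Y := by
  have hp : ProvFrom (insert β₂ (insert β₁ (KSet D Y))) Formula.bot := by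
    by_contra hc; exact h hc
  exact kset_closure hY (deduction (deduction hp))

/-- Extension: if `K_D (β → ⊥) ∉ Y` then there is an MCS containing `KSet D Y` and `β`. -/
lemma extend_know {D : Set Ag} {Y : Set (Formula α Ag)} (hY : MCS Y)
    {β : Formula α Ag} (h : Formula.know D (Formula.imp β Formula.bot) ∉ Y) :
    ∃ Z, MCS Z ∧ KSet D Y ⊆ Z ∧ β ∈ Z := by
  have hc : Consistent (insert β (KSet D Y)) := by
    by_contra hc; exact h (kset_incons_one hY hc)
  obtain ⟨Z, hsub, hZ⟩ := lindenbaum hc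
  exact ⟨Z, hZ, fun χ hχ => hsub (Set.mem_insert_of_mem _ hχ), hsub (Set.mem_insert _ _)⟩

lemma extend_know_two {D : Set Ag} {Y : Set (Formula α Ag)} (hY : MCS Y)
    {β₁ β₂ : Formula α Ag}
    (h : Formula.know D (Formula.imp β₁ (Formula.imp β₂ Formula.bot)) ∉ Y) :
    ∃ Z, MCS Z ∧ KSet D Y ⊆ Z ∧ β₁ ∈ Z ∧ β₂ ∈ Z := by
  have hc : Consistent (insert β₂ (insert β₁ (KSet D Y))) := by
    by_contra hc; exact h (kset_incons_two hY hc)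
  obtain ⟨Z, hsub, hZ⟩ := lindenbaum hc
  exact ⟨Z, hZ, fun χ hχ => hsub (Set.mem_insert_of_mem _ (Set.mem_insert_of_mem _ hχ)),
    hsub (Set.mem_insert_of_mem _ (Set.mem_insert _ _)), hsub (Set.mem_insert _ _)⟩

/-- A convenient reformulation: extend with the negation of a non-known formula. -/
lemma extend_not_know {D : Set Ag} {Y : Set (Formula α Ag)} (hY : MCS Y)
    {φ : Formula α Ag} (h : Formula.know D φ ∉ Y) :
    ∃ Z, MCS Z ∧ KSet D Y ⊆ Z ∧ Formula.neg φ ∈ Z := by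
  apply extend_know hY
  intro hmem
  apply h
  refine mcs_mp_prov hY (know_imp ?_) hmem
  apply Prov.taut; intro v; simp only [Formula.eval]
  generalize Formula.eval v φ = a; revert a; decide

end Clandestine
namespace Clandestine

open Formula List

variable {α Ag : Type}

abbrev Entry (α Ag : Type) := Set Ag × Set (Formula α Ag)

/-- Head theory of a history. -/
def hdT : List (Entry α Ag) → Set (Formula α Ag)
  | [] => ∅
  | e :: _ => e.2

@[simp] lemma hdT_cons (e : Entry α Ag) (l : List (Entry α Ag)) : hdT (e :: l) = e.2 := rfl

/-- A valid tree edge from a node with theory `Yp` to a child `e`. -/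
def EdgeOK (Yp : Set (Formula α Ag)) (e : Entry α Ag) : Prop :=
  MCS e.2 ∧ ∀ χ, Formula.know e.1 χ ∈ Yp → χ ∈ e.2

/-- Valid histories of the canonical tree with root theory `R`. -/
def ValidList (R : Set (Formula α Ag)) : List (Entry α Ag) → Prop
  | [] => False
  | [e] => e = (∅, R)
  | e :: f :: t => EdgeOK f.2 e ∧ ValidList R (f :: t)

lemma valid_ne_nil {R : Set (Formula α Ag)} {l : List (Entry α Ag)}
    (h : ValidList R l) : l ≠ [] := by
  intro he; subst he; exact h

lemma valid_cons {R : Set (Formula α Ag)} {e : Entry α Ag} {l : List (Entry α Ag)}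
    (hl : ValidList R l) (he : EdgeOK (hdT l) e) : ValidList R (e :: l) := by
  cases l with
  | nil => exact absurd hl (by simp [ValidList])
  | cons f t => exact ⟨he, hl⟩

lemma valid_of_valid_cons {R : Set (Formula α Ag)} {e : Entry α Ag} {l : List (Entry α Ag)}
    (h : ValidList R (e :: l)) (hne : l ≠ []) : ValidList R l := by
  cases l with
  | nil => exact absurd rfl hne
  | cons f t => exact h.2

lemma edgeOK_of_valid_cons {R : Set (Formula α Ag)} {e : Entry α Ag} {l : List (Entry α Ag)}
    (h : ValidList R (e :: l)) (hne : l ≠ []) : EdgeOK (hdT l) e := by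
  cases l with
  | nil => exact absurd rfl hne
  | cons f t => exact h.1

lemma valid_suffix {R : Set (Formula α Ag)} {t l : List (Entry α Ag)}
    (h : ValidList R (t ++ l)) (hne : l ≠ []) : ValidList R l := by
  induction t with
  | nil => exact h
  | cons e t ih =>
    apply ih
    apply valid_of_valid_cons h
    intro hc
    rcases List.append_eq_nil_iff.mp hc with ⟨_, h2⟩
    exact hne h2

lemma mcs_hdT {R : Set (Formula α Ag)} (hR : MCS R) {l : List (Entry α Ag)}
    (h : ValidList R l) : MCS (hdT l) := by
  cases l with
  | nil => exact absurd h (by simp [ValidList])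
  | cons e t =>
    cases t with
    | nil =>
      have : e = (∅, R) := h
      simp [this, hdT, hR]
    | cons f t' => exact h.1.1

lemma root_suffix {R : Set (Formula α Ag)} {l : List (Entry α Ag)}
    (h : ValidList R l) : ∃ t, l = t ++ [((∅ : Set Ag), R)] := by
  induction l with
  | nil => exact absurd h (by simp [ValidList])
  | cons e l ih =>
    cases l with
    | nil =>
      have : e = (∅, R) := h
      exact ⟨[], by simp [this]⟩
    | cons f t' =>
      obtain ⟨t, ht⟩ := ih h.2
      exact ⟨e :: t, by simp [ht]⟩

/-- Knowledge of a subcoalition of the edge label transfers across an edge (both ways). -/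
lemma edge_know_iff {Yp : Set (Formula α Ag)} {e : Entry α Ag} (hp : MCS Yp)
    (he : EdgeOK Yp e) {C : Set Ag} (hC : C ⊆ e.1) (χ : Formula α Ag) :
    (Formula.know C χ ∈ Yp ↔ Formula.know C χ ∈ e.2) := by
  constructor
  · intro h
    apply he.2
    exact mcs_mp_prov hp (Prov.mono (Formula.know C χ) hC) (mcs_mp_prov hp (know_four C χ) h)
  · intro h
    by_contra hn
    have h5 : Formula.neg (Formula.know C χ) ∈ Yp := (mcs_not_mem_iff hp).mp hn
    have h6 : Formula.know C (Formula.neg (Formula.know C χ)) ∈ Yp :=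
      mcs_mp_prov hp (Prov.negIntro C χ) h5
    have h7 : Formula.know e.1 (Formula.neg (Formula.know C χ)) ∈ Yp :=
      mcs_mp_prov hp (Prov.mono _ hC) h6
    have h8 : Formula.neg (Formula.know C χ) ∈ e.2 := he.2 _ h7
    exact mcs_not_both he.1 h h8

/-- Knowledge of `C` transfers along paths all of whose labels contain `C`. -/
lemma path_know_iff {R : Set (Formula α Ag)} (hR : MCS R) {t l : List (Entry α Ag)}
    (hv : ValidList R (t ++ l)) (hne : l ≠ []) {C : Set Ag}
    (ht : ∀ e ∈ t, C ⊆ e.1) (χ : Formula α Ag) :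
    (Formula.know C χ ∈ hdT l ↔ Formula.know C χ ∈ hdT (t ++ l)) := by
  induction t with
  | nil => simp
  | cons e t ih =>
    have hne' : t ++ l ≠ [] := by
      intro hc; rcases List.append_eq_nil_iff.mp hc with ⟨_, h2⟩; exact hne h2
    have hv' : ValidList R (t ++ l) := valid_of_valid_cons hv hne'
    have hedge : EdgeOK (hdT (t ++ l)) e := edgeOK_of_valid_cons hv hne'
    have hmcs : MCS (hdT (t ++ l)) := mcs_hdT hR hv'
    have h1 := ih hv' (fun e' he' => ht e' (List.mem_cons_of_mem _ he'))
    have h2 := edge_know_iff hmcs hedge (ht e List.mem_cons_self) χ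
    simpa using h1.trans h2

/-- `PathOK C v l`: `v` is an ancestor of `l` and all labels on the way contain `C`. -/
def PathOK (C : Set Ag) (v l : List (Entry α Ag)) : Prop :=
  ∃ t, l = t ++ v ∧ ∀ e ∈ t, C ⊆ e.1

lemma PathOK.suffix {C : Set Ag} {v l : List (Entry α Ag)} (h : PathOK C v l) :
    v <:+ l := by obtain ⟨t, ht, _⟩ := h; exact ⟨t, ht.symm⟩

lemma pathOK_refl (C : Set Ag) (l : List (Entry α Ag)) : PathOK C l l :=
  ⟨[], by simp⟩

lemma pathOK_trans {C : Set Ag} {v m l : List (Entry α Ag)}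
    (h1 : PathOK C v m) (h2 : PathOK C m l) : PathOK C v l := by
  obtain ⟨t1, rfl, ht1⟩ := h1
  obtain ⟨t2, rfl, ht2⟩ := h2
  refine ⟨t2 ++ t1, by simp, fun e he => ?_⟩
  rcases List.mem_append.mp he with h | h
  exacts [ht2 e h, ht1 e h]

lemma pathOK_mono {C C' : Set Ag} (hsub : C' ⊆ C) {v l : List (Entry α Ag)}
    (h : PathOK C v l) : PathOK C' v l := by
  obtain ⟨t, rfl, ht⟩ := h
  exact ⟨t, rfl, fun e he => hsub.trans (ht e he)⟩

/-- If `v` lies below `v'` and both are ancestors of `l`, a `C`-path from `v` to `l`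
restricts to a `C`-path from `v` to `v'`. -/
lemma pathOK_mid {C : Set Ag} {v v' l : List (Entry α Ag)}
    (h : PathOK C v l) (hsuf : v' <:+ l) (hsuf' : v <:+ v') : PathOK C v v' := by
  obtain ⟨t, rfl, ht⟩ := h
  obtain ⟨s, rfl⟩ := hsuf'
  obtain ⟨t', ht'⟩ := hsuf
  have : t' ++ (s ++ v) = t ++ v := ht'
  rw [← List.append_assoc] at this
  have hts : t' ++ s = t := List.append_cancel_right this
  refine ⟨s, rfl, fun e he => ht e ?_⟩
  rw [← hts]
  exact List.mem_append.mpr (Or.inr he)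

lemma suffix_total {A : Type*} {l₁ l₂ l₃ : List A} (h1 : l₁ <:+ l₃) (h2 : l₂ <:+ l₃) :
    l₁ <:+ l₂ ∨ l₂ <:+ l₁ := by
  induction l₃ with
  | nil =>
    rw [List.suffix_nil] at h1 h2; subst h1; subst h2; simp
  | cons a t ih =>
    rcases List.suffix_cons_iff.mp h1 with rfl | h1'
    · right; exact h2
    · rcases List.suffix_cons_iff.mp h2 with rfl | h2'
      · left; exact h1'.trans (List.suffix_cons a t)
      · exact ih h1' h2'

/-- Indistinguishability of agent `a` between two histories. -/
def Sim (a : Ag) (w u : List (Entry α Ag)) : Prop :=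
  ∃ v, v ≠ [] ∧ PathOK {a} v w ∧ PathOK {a} v u

lemma sim_refl {a : Ag} {w : List (Entry α Ag)} (h : w ≠ []) : Sim a w w :=
  ⟨w, h, pathOK_refl _ _, pathOK_refl _ _⟩

lemma sim_symm {a : Ag} {w u : List (Entry α Ag)} (h : Sim a w u) : Sim a u w := by
  obtain ⟨v, h1, h2, h3⟩ := h; exact ⟨v, h1, h3, h2⟩

lemma sim_trans {a : Ag} {w u x : List (Entry α Ag)}
    (h : Sim a w u) (h' : Sim a u x) : Sim a w x := by
  obtain ⟨v₁, hv₁ne, hv₁w, hv₁u⟩ := h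
  obtain ⟨v₂, hv₂ne, hv₂u, hv₂x⟩ := h'
  rcases suffix_total hv₁u.suffix hv₂u.suffix with hs | hs
  · -- v₁ <:+ v₂ : use v₁
    have hmid : PathOK {a} v₁ v₂ := pathOK_mid hv₁u hv₂u.suffix hs
    exact ⟨v₁, hv₁ne, hv₁w, pathOK_trans hmid hv₂x⟩
  · -- v₂ <:+ v₁ : use v₂
    have hmid : PathOK {a} v₂ v₁ := pathOK_mid hv₂u hv₁u.suffix hs
    exact ⟨v₂, hv₂ne, pathOK_trans hmid hv₁w, hv₂x⟩

end Clandestine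
namespace Clandestine

open Formula List Classical

variable {α Ag : Type}

lemma pathOK_root {R : Set (Formula α Ag)} {l : List (Entry α Ag)}
    (h : ValidList R l) : PathOK (∅ : Set Ag) [((∅ : Set Ag), R)] l := by
  obtain ⟨t, ht⟩ := root_suffix h
  exact ⟨t, ht, fun e _ => Set.empty_subset _⟩

/-- Common-ancestor lemma: if every agent of a nonempty coalition `C` cannot
distinguish `w` from `u`, then there is a common ancestor reached by `C`-labelled
edges on both sides. -/
lemma simC_common {C : Set Ag} (hC : C.Nonempty) {w u : List (Entry α Ag)}
    (h : ∀ a ∈ C, Sim a w u) :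
    ∃ v, v ≠ [] ∧ PathOK C v w ∧ PathOK C v u := by
  classical
  set P : ℕ → Prop := fun n => ∃ v : List (Entry α Ag), v.length = n ∧ v ≠ [] ∧
    ∃ a ∈ C, PathOK {a} v w ∧ PathOK {a} v u with hP
  obtain ⟨a₀, ha₀⟩ := hC
  obtain ⟨v₀, hv₀ne, hv₀w, hv₀u⟩ := h a₀ ha₀
  have hP₀ : P v₀.length := ⟨v₀, rfl, hv₀ne, a₀, ha₀, hv₀w, hv₀u⟩
  have hlen₀ : v₀.length ≤ w.length := hv₀w.suffix.length_le
  have hPn : P (Nat.findGreatest P w.length) := Nat.findGreatest_spec hlen₀ hP₀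
  obtain ⟨v, hvlen, hvne, a₁, ha₁, hvw, hvu⟩ := hPn
  -- every agent's witness is an ancestor of v
  have key : ∀ a ∈ C, ∀ e, (∃ t, w = t ++ v ∧ e ∈ t) ∨ (∃ t, u = t ++ v ∧ e ∈ t) → a ∈ e.1 := by
    intro a ha e he
    obtain ⟨va, hvane, hvaw, hvau⟩ := h a ha
    have hPa : P va.length := ⟨va, rfl, hvane, a, ha, hvaw, hvau⟩
    have hle : va.length ≤ Nat.findGreatest P w.length :=
      Nat.le_findGreatest hvaw.suffix.length_le hPa
    rw [← hvlen] at hle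
    have hsuf : va <:+ v := by
      rcases suffix_total hvaw.suffix hvw.suffix with hs | hs
      · exact hs
      · have := hs.eq_of_length (le_antisymm hs.length_le hle)
        rw [this]
    -- labels between va and v are among those between va and w (or u)
    obtain ⟨s, rfl⟩ := hsuf
    rcases he with ⟨t, htw, het⟩ | ⟨t, htu, het⟩
    · obtain ⟨ta, hta, hlab⟩ := hvaw
      rw [htw, ← List.append_assoc] at hta
      have : ta = t ++ s := (List.append_cancel_right hta).symm
      have hmem : e ∈ ta := by rw [this]; exact List.mem_append.mpr (Or.inl het)
      have := hlab e hmem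
      simpa using this rfl
    · obtain ⟨ta, hta, hlab⟩ := hvau
      rw [htu, ← List.append_assoc] at hta
      have : ta = t ++ s := (List.append_cancel_right hta).symm
      have hmem : e ∈ ta := by rw [this]; exact List.mem_append.mpr (Or.inl het)
      have := hlab e hmem
      simpa using this rfl
  obtain ⟨tw, htw, _⟩ := hvw
  obtain ⟨tu, htu, _⟩ := hvu
  refine ⟨v, hvne, ⟨tw, htw, fun e he a ha => key a ha e (Or.inl ⟨tw, htw, he⟩)⟩,
    ⟨tu, htu, fun e he a ha => key a ha e (Or.inr ⟨tu, htu, he⟩)⟩⟩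

/-- Knowledge of `C` transfers between `C`-indistinguishable histories. -/
lemma simC_know_iff {R : Set (Formula α Ag)} (hR : MCS R) {C : Set Ag}
    {w u : List (Entry α Ag)} (hw : ValidList R w) (hu : ValidList R u)
    (h : ∀ a ∈ C, Sim a w u) (χ : Formula α Ag) :
    (Formula.know C χ ∈ hdT w ↔ Formula.know C χ ∈ hdT u) := by
  rcases Set.eq_empty_or_nonempty C with rfl | hC
  · -- via the root
    have hrw := pathOK_root hw
    have hru := pathOK_root hu
    obtain ⟨tw, htw, hlw⟩ := hrw
    obtain ⟨tu, htu, hlu⟩ := hru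
    have h1 := path_know_iff hR (htw ▸ hw) (by simp) hlw χ
    have h2 := path_know_iff hR (htu ▸ hu) (by simp) hlu χ
    rw [← htw] at h1; rw [← htu] at h2
    exact h1.symm.trans h2
  · obtain ⟨v, hvne, hvw, hvu⟩ := simC_common hC h
    obtain ⟨tw, htw, hlw⟩ := hvw
    obtain ⟨tu, htu, hlu⟩ := hvu
    have h1 := path_know_iff hR (htw ▸ hw) hvne hlw χ
    have h2 := path_know_iff hR (htu ▸ hu) hvne hlu χ
    rw [← htw] at h1; rw [← htu] at h2
    exact h1.symm.trans h2

end Clandestine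
namespace Clandestine

open Formula

variable {α Ag : Type}

/-- Nontermination key: a coalition with clandestine power to achieve `δ` cannot be
known (by everyone else) to be unable to end up knowing `δ`. -/
lemma nonterm_key {Y : Set (Formula α Ag)} (hY : MCS Y) {C' : Set Ag} {δ : Formula α Ag}
    (hH : Formula.how C' δ ∈ Y)
    (hK : Formula.know C'ᶜ (Formula.imp (Formula.know C' δ) Formula.bot) ∈ Y) : False := by
  set E : Set Ag := C' ∪ C'ᶜ with hE
  -- weaken inside : (K_C' δ → ⊥) → (K_C' δ → K_E ⊥)
  have t1 : Prov (Formula.imp (Formula.imp (Formula.know C' δ) Formula.bot)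
      (Formula.imp (Formula.know C' δ) (Formula.know E Formula.bot))) := by
    apply Prov.taut; intro v; simp only [Formula.eval]
    generalize v (Formula.know C' δ) = a
    generalize v (Formula.know E Formula.bot) = b
    revert a b; decide
  have h1 : Formula.know C'ᶜ (Formula.imp (Formula.know C' δ) (Formula.know E Formula.bot)) ∈ Y :=
    mcs_mp_prov hY (know_imp t1) hK
  have h2 : Formula.know C'ᶜ (Formula.know C'ᶜ
      (Formula.imp (Formula.know C' δ) (Formula.know E Formula.bot))) ∈ Y :=
    mcs_mp_prov hY (know_four _ _) h1
  have h3 : Formula.know E (Formula.know C'ᶜ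
      (Formula.imp (Formula.know C' δ) (Formula.know E Formula.bot))) ∈ Y :=
    mcs_mp_prov hY (Prov.mono _ (Set.subset_union_right)) h2
  have hcia := Prov.cia (α := α) (C := C') (I := C'ᶜ) (A := (∅ : Set Ag)) δ Formula.bot
    (by simp)
  rw [Set.empty_union] at hcia
  have h4 : Formula.how E Formula.bot ∈ Y :=
    mcs_mp_mem hY (mcs_mp_prov hY hcia h3) hH
  exact mcs_not_both hY h4 (mcs_mem_of_prov hY (Prov.nonterm E))

lemma compl_union_diff {C' C : Set Ag} (hsub : C' ⊆ C) : Cᶜ ∪ (C \ C') = C'ᶜ := by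
  ext x
  simp only [Set.mem_union, Set.mem_compl_iff, Set.mem_diff]
  constructor
  · rintro (h | ⟨_, h⟩) hx
    · exact h (hsub hx)
    · exact h hx
  · intro h
    by_cases hx : x ∈ C
    · exact Or.inr ⟨hx, h⟩
    · exact Or.inl hx

/-- The main CIA consequence used in the truth lemma. -/
lemma cia_key {Y : Set (Formula α Ag)} (hY : MCS Y) {C' C : Set Ag} (hsub : C' ⊆ C)
    {δ φ : Formula α Ag}
    (h : Formula.know C (Formula.know C'ᶜ
      (Formula.imp (Formula.know C' δ) (Formula.know C φ))) ∈ Y) :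
    Formula.imp (Formula.how C' δ) (Formula.how C φ) ∈ Y := by
  have hcia := Prov.cia (α := α) (C := C') (I := C \ C') (A := Cᶜ) δ φ
    (by
      ext x
      simp only [Set.mem_inter_iff, Set.mem_union, Set.mem_diff, Set.mem_compl_iff,
        Set.mem_empty_iff_false, iff_false, not_and]
      rintro hx (⟨_, h2⟩ | h2)
      · exact h2 hx
      · exact h2 (hsub hx))
  rw [Set.union_diff_cancel hsub, compl_union_diff hsub] at hcia
  exact mcs_mp_prov hY hcia h

/-- If `C` knows that everyone outside a nonempty `C' ⊆ C` knows `K_C φ`,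
then `C` has clandestine power for `φ`. -/
lemma know_know_how {Y : Set (Formula α Ag)} (hY : MCS Y) {C' C : Set Ag}
    (hne : C'.Nonempty) (hsub : C' ⊆ C) {φ : Formula α Ag}
    (h : Formula.know C (Formula.know C'ᶜ (Formula.know C φ)) ∈ Y) :
    Formula.how C φ ∈ Y := by
  have t1 : Prov (Formula.imp (Formula.know C φ)
      (Formula.imp (Formula.know C' Formula.top) (Formula.know C φ))) := by
    apply Prov.taut; intro v; simp only [Formula.eval]
    generalize v (Formula.know C φ) = a
    generalize v (Formula.know C' Formula.top) = b
    revert a b; decide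
  have h1 : Formula.know C (Formula.know C'ᶜ
      (Formula.imp (Formula.know C' Formula.top) (Formula.know C φ))) ∈ Y :=
    mcs_mp_prov hY (know_imp (know_imp t1)) h
  have h2 := cia_key hY hsub h1
  have htop : Formula.how C' (Formula.top (α := α) (Ag := Ag)) ∈ Y := by
    apply mcs_mem_of_prov hY
    apply Prov.necH (Set.nonempty_iff_ne_empty.mp hne)
    apply Prov.taut; intro v; simp only [Formula.top, Formula.eval]; rfl
  exact mcs_mp_mem hY h2 htop

/-- Negative introspection of clandestine power. -/
lemma how_neg_intro_mem {Y : Set (Formula α Ag)} (hY : MCS Y) {C' C : Set Ag}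
    (hsub : C' ⊆ C) {δ : Formula α Ag} (h : Formula.neg (Formula.how C' δ) ∈ Y) :
    Formula.know C (Formula.neg (Formula.how C' δ)) ∈ Y := by
  have hp : Prov (Formula.imp (Formula.how C' δ) (Formula.know C (Formula.how C' δ))) :=
    prov_imp_trans (Prov.stratIntro C' δ) (Prov.mono _ hsub)
  exact mcs_mp_prov hY (neg_know_intro hp) h

/-- Positive introspection of clandestine power. -/
lemma how_pos_intro_mem {Y : Set (Formula α Ag)} (hY : MCS Y) {C' C : Set Ag}
    (hsub : C' ⊆ C) {δ : Formula α Ag} (h : Formula.how C' δ ∈ Y) :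
    Formula.know C (Formula.how C' δ) ∈ Y :=
  mcs_mp_prov hY (prov_imp_trans (Prov.stratIntro C' δ) (Prov.mono _ hsub)) h

end Clandestine
namespace Clandestine

open Formula

variable {α Ag : Type}

/-- Mechanism of the canonical game. -/
def CM (R : Set (Formula α Ag)) (w : {l : List (Entry α Ag) // ValidList R l})
    (C' : Set Ag) (δ : Formula α Ag)
    (u : {l : List (Entry α Ag) // ValidList R l}) : Prop :=
  (∃ Y, u.1 = ((C'ᶜ, Y) : Entry α Ag) :: w.1) ∧
    (Formula.how C' δ ∈ hdT w.1 → Formula.know C' δ ∈ hdT u.1)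

/-- The canonical tree game over root theory `R`. -/
def CGame (R : Set (Formula α Ag)) (hR : MCS R) : Game α Ag where
  W := {l : List (Entry α Ag) // ValidList R l}
  sim a w u := Sim a w.1 u.1
  sim_equiv a := ⟨fun w => sim_refl (valid_ne_nil w.2), sim_symm, sim_trans⟩
  Δ := Formula α Ag
  Δ_nonempty := ⟨Formula.bot⟩
  M := CM R
  concealment := by
    rintro w C' δ u ⟨⟨Y, hY⟩, _⟩ a ha
    refine ⟨w.1, valid_ne_nil w.2, pathOK_refl _ _, ⟨[((C'ᶜ, Y) : Entry α Ag)], by simp [hY], ?_⟩⟩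
    rintro e he
    simp only [List.mem_singleton] at he
    subst he
    simpa using ha
  nonterm := by
    intro w C' δ
    have hYw : MCS (hdT w.1) := mcs_hdT hR w.2
    by_cases hH : Formula.how C' δ ∈ hdT w.1
    · have hnk : Formula.know C'ᶜ (Formula.imp (Formula.know C' δ) Formula.bot) ∉ hdT w.1 :=
        fun hk => nonterm_key hYw hH hk
      obtain ⟨Z, hZ, hZsub, hZmem⟩ := extend_know hYw hnk
      refine ⟨⟨((C'ᶜ, Z) : Entry α Ag) :: w.1, valid_cons w.2 ⟨hZ, fun χ hχ => hZsub hχ⟩⟩,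
        ⟨Z, rfl⟩, fun _ => ?_⟩
      simpa using hZmem
    · obtain ⟨Z, hZsub, hZ⟩ := lindenbaum (kset_consistent (D := C'ᶜ) hYw)
      exact ⟨⟨((C'ᶜ, Z) : Entry α Ag) :: w.1, valid_cons w.2 ⟨hZ, fun χ hχ => hZsub hχ⟩⟩,
        ⟨Z, rfl⟩, fun hc => absurd hc hH⟩
  π p := {w | Formula.var p ∈ hdT w.1}

/-- One-step similarity: a child is `C`-indistinguishable for every `a ∈ C ⊆ label`. -/
lemma sim_child {w : List (Entry α Ag)} (hw : w ≠ [])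
    {e : Entry α Ag} {a : Ag} (ha : a ∈ e.1) : Sim a w (e :: w) :=
  ⟨w, hw, pathOK_refl _ _,
    ⟨[e], rfl, by rintro e' he'; simp only [List.mem_singleton] at he'; subst he'; simpa using ha⟩⟩

/-- The truth lemma for the canonical tree game. -/
theorem truth_lemma {R : Set (Formula α Ag)} (hR : MCS R) :
    ∀ (φ : Formula α Ag) (w : (CGame R hR).W), (CGame R hR).Sat w φ ↔ φ ∈ hdT w.1 := by
  intro φ
  induction φ with
  | var p => intro w; rfl
  | bot =>
    intro w
    simp only [Game.Sat]
    exact ⟨fun h => h.elim, fun h => mcs_bot_not_mem (mcs_hdT hR w.2) h⟩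
  | neg φ ih =>
    intro w
    have hY := mcs_hdT hR w.2
    simp only [Game.Sat, ih w]
    exact (not_iff_not.mpr (Iff.rfl)).trans (mcs_not_mem_iff hY)
  | imp φ ψ ihφ ihψ =>
    intro w
    have hY := mcs_hdT hR w.2
    simp only [Game.Sat, ihφ w, ihψ w]
    exact (mcs_imp_mem_iff hY).symm
  | know C φ ih =>
    intro w
    have hY := mcs_hdT hR w.2
    constructor
    · -- Sat → membership, by contraposition
      intro hsat
      by_contra hk
      obtain ⟨Z, hZ, hZsub, hZneg⟩ := extend_not_know hY hk
      set u : (CGame R hR).W :=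
        ⟨((C, Z) : Entry α Ag) :: w.1, valid_cons w.2 ⟨hZ, fun χ hχ => hZsub hχ⟩⟩ with hu
      have hsim : (CGame R hR).simC C w u := by
        intro a ha
        exact sim_child (valid_ne_nil w.2) ha
      have := (ih u).mp (hsat u hsim)
      exact mcs_not_both hZ (by simpa [hu] using this) (by simpa [hu] using hZneg)
    · intro hmem u hsim
      have hknow : Formula.know C φ ∈ hdT u.1 :=
        (simC_know_iff hR w.2 u.2 hsim φ).mp hmem
      have : φ ∈ hdT u.1 := mcs_mp_prov (mcs_hdT hR u.2) (Prov.truth C φ) hknow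
      exact (ih u).mpr this
  | how C φ ih =>
    intro w
    have hY := mcs_hdT hR w.2
    constructor
    · -- Sat → membership, by contraposition
      intro hsat
      by_contra hk
      have hnH : Formula.neg (Formula.how C φ) ∈ hdT w.1 := (mcs_not_mem_iff hY).mp hk
      obtain ⟨C', hsub, hC'ne, δ, hfa⟩ := hsat
      by_cases hδ : Formula.how C' δ ∈ hdT w.1
      · -- Case A
        set θ : Formula α Ag :=
          Formula.know C'ᶜ (Formula.imp (Formula.know C' δ) (Formula.know C φ)) with hθ
        have hknθ : Formula.know C θ ∉ hdT w.1 := by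
          intro hc
          exact mcs_not_both hY (mcs_mp_mem hY (cia_key hY hsub hc) hδ) hnH
        obtain ⟨Y, hYmcs, hYsub, hYneg⟩ := extend_not_know hY hknθ
        set w' : (CGame R hR).W :=
          ⟨((C, Y) : Entry α Ag) :: w.1, valid_cons w.2 ⟨hYmcs, fun χ hχ => hYsub hχ⟩⟩ with hw'
        have hδY : Formula.how C' δ ∈ Y := hYsub (how_pos_intro_mem hY hsub hδ)
        -- build the successor forcing K_C' δ and ¬K_C φ
        have hnk2 : Formula.know C'ᶜ (Formula.imp (Formula.know C' δ)
            (Formula.imp (Formula.neg (Formula.know C φ)) Formula.bot)) ∉ Y := by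
          intro hc
          have t : Prov (Formula.imp
              (Formula.imp (Formula.know C' δ) (Formula.imp (Formula.neg (Formula.know C φ)) Formula.bot))
              (Formula.imp (Formula.know C' δ) (Formula.know C φ))) := by
            apply Prov.taut; intro v; simp only [Formula.eval]
            generalize v (Formula.know C' δ) = a
            generalize v (Formula.know C φ) = b
            revert a b; decide
          have : θ ∈ Y := mcs_mp_prov hYmcs (know_imp t) hc
          exact mcs_not_both hYmcs this hYneg
        obtain ⟨Z, hZmcs, hZsub, hZδ, hZnk⟩ := extend_know_two hYmcs hnk2
        set u : (CGame R hR).W :=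
          ⟨((C'ᶜ, Z) : Entry α Ag) :: w'.1, valid_cons w'.2 ⟨hZmcs, fun χ hχ => hZsub hχ⟩⟩ with hu
        have hknφZ : Formula.know C φ ∉ Z := fun hc => mcs_not_both hZmcs hc hZnk
        obtain ⟨Z', hZ'mcs, hZ'sub, hZ'neg⟩ := extend_not_know hZmcs hknφZ
        set u' : (CGame R hR).W :=
          ⟨((C, Z') : Entry α Ag) :: u.1, valid_cons u.2 ⟨hZ'mcs, fun χ hχ => hZ'sub hχ⟩⟩ with hu'
        have hsat' := hfa w' u u'
          (fun a ha => sim_child (valid_ne_nil w.2) ha)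
          ⟨⟨Z, rfl⟩, fun _ => by simpa [hu] using hZδ⟩
          (fun a ha => sim_child (valid_ne_nil u.2) ha)
        have : φ ∈ Z' := by simpa [hu'] using (ih u').mp hsat'
        exact mcs_not_both hZ'mcs this hZ'neg
      · -- Case B
        have hδn : Formula.neg (Formula.how C' δ) ∈ hdT w.1 := (mcs_not_mem_iff hY).mp hδ
        have hknθ : Formula.know C (Formula.know C'ᶜ (Formula.know C φ)) ∉ hdT w.1 := by
          intro hc
          exact mcs_not_both hY (know_know_how hY hC'ne hsub hc) hnH
        obtain ⟨Y, hYmcs, hYsub, hYneg⟩ := extend_not_know hY hknθ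
        set w' : (CGame R hR).W :=
          ⟨((C, Y) : Entry α Ag) :: w.1, valid_cons w.2 ⟨hYmcs, fun χ hχ => hYsub hχ⟩⟩ with hw'
        have hδY : Formula.how C' δ ∉ Y := by
          intro hc
          exact mcs_not_both hYmcs hc (hYsub (how_neg_intro_mem hY hsub hδn))
        have hnk2 : Formula.know C'ᶜ (Formula.know C φ) ∉ Y :=
          fun hc => mcs_not_both hYmcs hc hYneg
        obtain ⟨Z, hZmcs, hZsub, hZneg⟩ := extend_not_know hYmcs hnk2
        set u : (CGame R hR).W :=
          ⟨((C'ᶜ, Z) : Entry α Ag) :: w'.1, valid_cons w'.2 ⟨hZmcs, fun χ hχ => hZsub hχ⟩⟩ with hu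
        have hknφZ : Formula.know C φ ∉ Z := fun hc => mcs_not_both hZmcs hc hZneg
        obtain ⟨Z', hZ'mcs, hZ'sub, hZ'neg⟩ := extend_not_know hZmcs hknφZ
        set u' : (CGame R hR).W :=
          ⟨((C, Z') : Entry α Ag) :: u.1, valid_cons u.2 ⟨hZ'mcs, fun χ hχ => hZ'sub hχ⟩⟩ with hu'
        have hsat' := hfa w' u u'
          (fun a ha => sim_child (valid_ne_nil w.2) ha)
          ⟨⟨Z, rfl⟩, fun hc => absurd (by simpa [hw'] using hc) hδY⟩
          (fun a ha => sim_child (valid_ne_nil u.2) ha)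
        have : φ ∈ Z' := by simpa [hu'] using (ih u').mp hsat'
        exact mcs_not_both hZ'mcs this hZ'neg
    · -- membership → Sat
      intro hmem
      have hCne : C.Nonempty := by
        rcases Set.eq_empty_or_nonempty C with rfl | h
        · exact absurd hmem (fun hc =>
            mcs_not_both hY hc (mcs_mem_of_prov hY (Prov.emptyCoal φ)))
        · exact h
      refine ⟨C, subset_rfl, hCne, φ, ?_⟩
      intro w' u u' hsim hM hsim'
      have hKH : Formula.know C (Formula.how C φ) ∈ hdT w.1 :=
        how_pos_intro_mem hY subset_rfl hmem
      have hHw' : Formula.how C φ ∈ hdT w'.1 := by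
        have := (simC_know_iff hR w.2 w'.2 hsim (Formula.how C φ)).mp hKH
        exact mcs_mp_prov (mcs_hdT hR w'.2) (Prov.truth C _) this
      have hKu : Formula.know C φ ∈ hdT u.1 := hM.2 hHw'
      have hKu' : Formula.know C φ ∈ hdT u'.1 :=
        (simC_know_iff hR u.2 u'.2 hsim' φ).mp hKu
      have : φ ∈ hdT u'.1 := mcs_mp_prov (mcs_hdT hR u'.2) (Prov.truth C φ) hKu'
      exact (ih u').mpr this

end Clandestine
/-- Strong completeness: if `X ⊬ φ`, then some state of some clandestine game
satisfies all of `X` but not `φ`. -/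
theorem strong_completeness {α Ag : Type} {X : Set (Formula α Ag)}
    {φ : Formula α Ag} (h : ¬ ProvFrom X φ) :
    ∃ (G : Game α Ag) (w : G.W),
      (∀ χ ∈ X, G.Sat w χ) ∧ ¬ G.Sat w φ := by
  classical
  have hcons : Consistent (insert (Formula.neg φ) X) := by
    intro hbot
    apply h
    have hd := Clandestine.deduction hbot
    have t : Prov (Formula.imp (Formula.imp (Formula.neg φ) Formula.bot) φ) := by
      apply Prov.taut; intro v; simp only [Formula.eval]
      generalize Formula.eval v φ = a; revert a; decide
    exact ProvFrom.mp (ProvFrom.thm t) hd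
  obtain ⟨R, hsub, hR⟩ := Clandestine.lindenbaum hcons
  refine ⟨Clandestine.CGame R hR, ⟨[((∅ : Set Ag), R)], rfl⟩, ?_, ?_⟩
  · intro χ hχ
    exact (Clandestine.truth_lemma hR χ _).mpr (hsub (Set.mem_insert_of_mem _ hχ))
  · intro hsat
    have hmem : φ ∈ Clandestine.hdT [((∅ : Set Ag), R)] :=
      (Clandestine.truth_lemma hR φ _).mp hsat
    exact Clandestine.mcs_not_both hR hmem (hsub (Set.mem_insert _ _))
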